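/- Let A be a 2n×2n real skew-symmetric matrix and θ¹,…,θ^{2n} anticommuting generators of an exterior algebra. Then (∑_{A,B} a_{AB} θ^A θ^B)^n = 2^n n! Pf(a) θ¹θ²⋯θ^{2n}, where Pf(a) is the Pfaffian of a. -/

import Mathlib

open ExteriorAlgebra Matrix

/-- The Pfaffian of a `2n × 2n` real matrix:
`Pf(a) = (1/(2^n n!)) ∑_{σ ∈ S_{2n}} sgn(σ) ∏_{i=1}^n a_{σ(2i−1) σ(2i)}`. -/
noncomputable def pfaffian {n : ℕ} (a : Matrix (Fin (2 * n)) (Fin (2 * n)) ℝ) : ℝ :=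
  (1 / ((2 : ℝ) ^ n * n.factorial)) *
    ∑ σ : Equiv.Perm (Fin (2 * n)),
      ((Equiv.Perm.sign σ : ℤ) : ℝ) *
        ∏ i : Fin n, a (σ ⟨2 * i, by omega⟩) (σ ⟨2 * i + 1, by omega⟩)

/-- Noncommutative multinomial expansion. -/
lemma pow_sum_eq_sum_prod {R ι : Type*} [Semiring R] [Fintype ι] (y : ι → R) :
    ∀ k : ℕ, (∑ p, y p) ^ k = ∑ f : Fin k → ι, (List.ofFn fun i => y (f i)).prod := by
  intro k
  induction k with
  | zero => simp
  | succ k ih =>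
    rw [pow_succ', ih, Finset.mul_sum]
    rw [← Equiv.sum_comp (Fin.consEquiv (fun _ => ι)), Fintype.sum_prod_type]
    simp only [Fin.consEquiv_apply, List.ofFn_succ, Fin.cons_zero, Fin.cons_succ,
      List.prod_cons, Finset.sum_mul, Finset.mul_sum]
    rw [Finset.sum_comm]

/-- Pull scalars out of a list product. -/
lemma listprod_smul {R A : Type*} [CommSemiring R] [Semiring A] [Algebra R A] :
    ∀ (k : ℕ) (c : Fin k → R) (m : Fin k → A),
      (List.ofFn fun i => c i • m i).prod = (∏ i, c i) • (List.ofFn m).prod := by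
  intro k
  induction k with
  | zero => simp
  | succ k ih =>
    intro c m
    simp only [List.ofFn_succ, List.prod_cons, Fin.prod_univ_succ, ih]
    rw [smul_mul_smul_comm, mul_smul]

lemma range_pair_prod {M : Type*} [Monoid M] (v : ℕ → M) :
    ∀ n : ℕ, ((List.range (2*n)).map v).prod
      = ((List.range n).map (fun i => v (2*i) * v (2*i+1))).prod := by
  intro n
  induction n with
  | zero => simp
  | succ n ih =>
    have h2 : 2 * (n+1) = (2*n + 1) + 1 := by ring
    rw [h2, List.range_succ, List.range_succ, List.range_succ]
    simp only [List.map_append, List.prod_append, ih, List.map_cons, List.map_nil,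
      List.prod_cons, List.prod_nil]
    simp [mul_assoc]

lemma ofFn_eq_range_map {M : Type*} (k : ℕ) (v : Fin k → M) (w : ℕ → M)
    (h : ∀ i : Fin k, w i = v i) : List.ofFn v = (List.range k).map w := by
  apply List.ext_getElem
  · simp
  · intro i h1 h2
    simp only [List.getElem_ofFn, List.getElem_map, List.getElem_range]
    exact (h _).symm

/-- The interleaving bijection between functions `Fin (2n) → α` and pair-valued functions. -/
def pairEquiv (n : ℕ) (α : Type*) : (Fin (2*n) → α) ≃ (Fin n → α × α) where
  toFun g i := (g ⟨2*i, by omega⟩, g ⟨2*i+1, by omega⟩)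
  invFun f j := if j.val % 2 = 0 then (f ⟨j.val/2, by omega⟩).1 else (f ⟨j.val/2, by omega⟩).2
  left_inv g := by
    funext j
    dsimp only
    rcases Nat.even_or_odd j.val with ⟨m, hm⟩ | ⟨m, hm⟩
    · rw [if_pos (by omega)]
      show g ⟨2*(j.val/2), _⟩ = g j
      congr 1
      exact Fin.ext (show 2*(j.val/2) = j.val by omega)
    · rw [if_neg (by omega)]
      show g ⟨2*(j.val/2)+1, _⟩ = g j
      congr 1
      exact Fin.ext (show 2*(j.val/2)+1 = j.val by omega)
  right_inv f := by
    funext i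
    dsimp only
    refine Prod.ext ?_ ?_
    · show (if (2*(i:ℕ)) % 2 = 0 then (f ⟨(2*(i:ℕ))/2, _⟩).1 else _) = (f i).1
      rw [if_pos (by omega)]
      have hi : (⟨(2*(i:ℕ))/2, by omega⟩ : Fin n) = i :=
        Fin.ext (show (2*(i:ℕ))/2 = (i:ℕ) by omega)
      rw [hi]
    · show (if (2*(i:ℕ)+1) % 2 = 0 then _ else (f ⟨(2*(i:ℕ)+1)/2, _⟩).2) = (f i).2
      rw [if_neg (by omega)]
      have hi : (⟨(2*(i:ℕ)+1)/2, by omega⟩ : Fin n) = i :=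
        Fin.ext (show (2*(i:ℕ)+1)/2 = (i:ℕ) by omega)
      rw [hi]


/-!
STATEMENT 7. In the exterior algebra on anticommuting generators
`θ¹, …, θ^{2n}`, for a real skew-symmetric `2n × 2n` matrix `a`,
`(∑_{A,B} a_{AB} θ^A θ^B)^n = 2^n n! Pf(a) θ¹θ²⋯θ^{2n}`.
-/
theorem grassmann_gaussian_pfaffian {n : ℕ}
    (a : Matrix (Fin (2 * n)) (Fin (2 * n)) ℝ)
    (hskew : aᵀ = -a) :
    let θ : Fin (2 * n) → ExteriorAlgebra ℝ (Fin (2 * n) → ℝ) :=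
      fun A => ExteriorAlgebra.ι ℝ (Pi.single A (1 : ℝ))
    (∑ A : Fin (2 * n), ∑ B : Fin (2 * n), a A B • (θ A * θ B)) ^ n
      = ((2 : ℝ) ^ n * n.factorial * pfaffian a) • (List.ofFn θ).prod := by
  intro θ
  classical
  set e : Fin (2*n) → (Fin (2*n) → ℝ) := fun j => Pi.single j (1:ℝ) with he
  set P : ExteriorAlgebra ℝ (Fin (2 * n) → ℝ) := (List.ofFn θ).prod with hP
  have hPι : P = ExteriorAlgebra.ιMulti ℝ (2*n) e := by
    rw [hP, ExteriorAlgebra.ιMulti_apply]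
  have hprod : ∀ g : Fin (2*n) → Fin (2*n),
      (List.ofFn fun j => θ (g j)).prod = ExteriorAlgebra.ιMulti ℝ (2*n) (e ∘ g) := by
    intro g
    rw [ExteriorAlgebra.ιMulti_apply]
    rfl
  set s : (Fin (2*n) → Fin (2*n)) → ℝ := fun g =>
    if h : Function.Bijective g
    then ((Equiv.Perm.sign (Equiv.ofBijective g h) : ℤ) : ℝ) else 0 with hs
  have key : ∀ g : Fin (2*n) → Fin (2*n),
      (List.ofFn fun j => θ (g j)).prod = s g • P := by
    intro g
    rw [hprod g, hs]
    dsimp only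
    by_cases hb : Function.Bijective g
    · rw [dif_pos hb]
      have hcomp : e ∘ g = e ∘ (Equiv.ofBijective g hb) := rfl
      rw [hcomp, hPι, AlternatingMap.map_perm, Units.smul_def,
        ← Int.cast_smul_eq_zsmul ℝ]
    · rw [dif_neg hb, zero_smul]
      apply AlternatingMap.map_eq_zero_of_not_injective
      intro hinj
      exact hb (Finite.injective_iff_bijective.mp (Function.Injective.of_comp hinj))
  calc (∑ A : Fin (2 * n), ∑ B : Fin (2 * n), a A B • (θ A * θ B)) ^ n
      = (∑ p : Fin (2*n) × Fin (2*n), a p.1 p.2 • (θ p.1 * θ p.2)) ^ n := by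
        rw [Fintype.sum_prod_type]
    _ = ∑ f : Fin n → Fin (2*n) × Fin (2*n),
          (List.ofFn fun i => a (f i).1 (f i).2 • (θ (f i).1 * θ (f i).2)).prod :=
        pow_sum_eq_sum_prod _ n
    _ = ∑ f : Fin n → Fin (2*n) × Fin (2*n),
          (∏ i, a (f i).1 (f i).2) • (List.ofFn fun i => θ (f i).1 * θ (f i).2).prod := by
        exact Finset.sum_congr rfl fun f _ => listprod_smul n _ _
    _ = ∑ g : Fin (2*n) → Fin (2*n),
          (∏ i : Fin n, a (g ⟨2*i, by omega⟩) (g ⟨2*i+1, by omega⟩)) •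
          (List.ofFn fun i : Fin n =>
            θ (g ⟨2*(i:ℕ), by omega⟩) * θ (g ⟨2*(i:ℕ)+1, by omega⟩)).prod := by
        rw [← Equiv.sum_comp (pairEquiv n (Fin (2*n)))]
        rfl
    _ = ∑ g : Fin (2*n) → Fin (2*n),
          (∏ i : Fin n, a (g ⟨2*i, by omega⟩) (g ⟨2*i+1, by omega⟩)) •
          (List.ofFn fun j => θ (g j)).prod := by
        refine Finset.sum_congr rfl fun g _ => ?_
        congr 1
        set w : ℕ → ExteriorAlgebra ℝ (Fin (2 * n) → ℝ) :=
          fun m => if h : m < 2*n then θ (g ⟨m, h⟩) else 1 with hw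
        have h1 : List.ofFn (fun j : Fin (2*n) => θ (g j)) = (List.range (2*n)).map w := by
          apply ofFn_eq_range_map
          intro i
          rw [hw]
          dsimp only
          rw [dif_pos i.isLt]
        have h2 : List.ofFn (fun i : Fin n =>
              θ (g ⟨2*(i:ℕ), by omega⟩) * θ (g ⟨2*(i:ℕ)+1, by omega⟩))
            = (List.range n).map (fun m => w (2*m) * w (2*m+1)) := by
          apply ofFn_eq_range_map
          intro i
          rw [hw]
          dsimp only
          rw [dif_pos (show 2*(i:ℕ) < 2*n by omega),
            dif_pos (show 2*(i:ℕ)+1 < 2*n by omega)]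
        rw [h2, h1, range_pair_prod w n]
    _ = ∑ g : Fin (2*n) → Fin (2*n),
          ((∏ i : Fin n, a (g ⟨2*i, by omega⟩) (g ⟨2*i+1, by omega⟩)) * s g) • P := by
        exact Finset.sum_congr rfl fun g _ => by rw [key g, smul_smul]
    _ = (∑ g : Fin (2*n) → Fin (2*n),
          (∏ i : Fin n, a (g ⟨2*i, by omega⟩) (g ⟨2*i+1, by omega⟩)) * s g) • P := by
        rw [Finset.sum_smul]
    _ = ((2 : ℝ) ^ n * n.factorial * pfaffian a) • P := by
        congr 1
        have hstep : ∑ g : Fin (2*n) → Fin (2*n),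
            (∏ i : Fin n, a (g ⟨2*i, by omega⟩) (g ⟨2*i+1, by omega⟩)) * s g
            = ∑ σ : Equiv.Perm (Fin (2 * n)),
              ((Equiv.Perm.sign σ : ℤ) : ℝ) *
                ∏ i : Fin n, a (σ ⟨2 * i, by omega⟩) (σ ⟨2 * i + 1, by omega⟩) := by
          rw [← Finset.sum_subset
            (Finset.filter_subset (fun g => Function.Bijective g) Finset.univ)
            (fun g _ hg => by
              have hb : ¬ Function.Bijective g := by simpa using hg
              rw [hs]; dsimp only; rw [dif_neg hb, mul_zero])]
          refine Finset.sum_bij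
            (fun g hg => Equiv.ofBijective g (by simpa using hg)) (fun _ _ => Finset.mem_univ _)
            ?_ ?_ ?_
          · intro g1 h1 g2 h2 heq
            have := congrArg (fun σ => (σ : Equiv.Perm (Fin (2*n))).toFun) heq
            exact this
          · intro σ _
            exact ⟨⇑σ, Finset.mem_filter.mpr ⟨Finset.mem_univ _, σ.bijective⟩, Equiv.ext fun x => rfl⟩
          · intro g hg
            have hb : Function.Bijective g := by simpa using hg
            rw [hs]
            dsimp only
            rw [dif_pos hb, mul_comm]
            rfl
        rw [hstep, pfaffian]
        have h1 : ((2:ℝ)^n) ≠ 0 := by positivity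
        have h2 : ((n.factorial : ℝ)) ≠ 0 := by positivity
        field_simp
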